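/- Let f : ℝ^d → ℝ be locally Lipschitz and assume hypotheses (H1), (H2), (H3) of the setting, with C_M > 0. Define D₁ := μ/(8(μ+L)), D₂ := μ/2, δ_GI := min{δ_A/4, D₁/C_M}. Then for every x ∈ ball(x̄, δ_GI) and every σ with 0 < σ ≤ D₁·dist(x, M), every g ∈ ∂_σ f(x) satisfies ‖g‖ ≥ D₂. -/

import Mathlib

set_option maxHeartbeats 1000000


open Metric Set Filter
open scoped InnerProductSpace

abbrev Euc (d : ℕ) := EuclideanSpace ℝ (Fin d)

noncomputable def clarkeSubdiff {d : ℕ} (f : Euc d → ℝ) (x : Euc d) : Set (Euc d) :=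
  convexHull ℝ {v | ∃ u : ℕ → Euc d,
    (∀ n, DifferentiableAt ℝ f (u n)) ∧
    Tendsto u atTop (nhds x) ∧
    Tendsto (fun n => gradient f (u n)) atTop (nhds v)}

noncomputable def goldsteinSubdiff {d : ℕ} (f : Euc d → ℝ) (σ : ℝ) (x : Euc d) : Set (Euc d) :=
  convexHull ℝ (⋃ y ∈ closedBall x σ, clarkeSubdiff f y)

theorem stmt2 {d : ℕ}
    (f : Euc d → ℝ) (hf : LocallyLipschitz f)
    (xbar : Euc d) (M : Set (Euc d)) (hxbarM : xbar ∈ M)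
    (δA L μ CM : ℝ)
    (hδA : 0 < δA) (hL : 0 < L) (hμ : 0 < μ) (hCM : 0 < CM)
    (P : Euc d → Euc d)
    (hP : ∀ z ∈ ball xbar (2*δA), P z ∈ M ∧ ‖z - P z‖ = Metric.infDist z M)
    (Tsp : Euc d → Submodule ℝ (Euc d)) (Q : Euc d → Euc d → Euc d)
    (hQ : ∀ x ∈ ball xbar δA, ∀ v, Q x v = ((Tsp x).orthogonalProjectionOnto v : Euc d))
    (H1 : ∀ x' ∈ ball xbar (2*δA), ∀ v ∈ clarkeSubdiff f x', ‖v‖ ≤ L)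
    (H2 : ∀ x' ∈ ball xbar δA, ∀ v ∈ clarkeSubdiff f x',
      μ * Metric.infDist x' M ≤ ⟪ v, x' - P x' ⟫_ℝ)
    (H3 : ∀ x ∈ ball xbar δA, ∀ x' ∈ ball xbar (2*δA),
      ‖P x' - P x - Q x (x' - x)‖ ≤ CM * (Metric.infDist x M ^ 2 + ‖x - x'‖ ^ 2))
    (D₁ D₂ δGI : ℝ)
    (hD₁ : D₁ = μ / (8*(μ+L)))
    (hD₂ : D₂ = μ/2)
    (hδGI : δGI = min (δA/4) (D₁/CM))
    (x : Euc d) (hx : x ∈ ball xbar δGI) (σ : ℝ) (hσ0 : 0 < σ)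
    (hσ : σ ≤ D₁ * Metric.infDist x M)
    (g : Euc d) (hg : g ∈ goldsteinSubdiff f σ x) :
    D₂ ≤ ‖g‖ := by
  have hD₁pos : 0 < D₁ := by rw [hD₁]; positivity
  have hD₁le : D₁ ≤ 1/8 := by
    rw [hD₁, div_le_div_iff₀ (by positivity) (by norm_num)]
    linarith only [hL]
  set r := Metric.infDist x M with hr
  clear_value r
  have hrpos : 0 < r := by
    rcases le_or_gt r 0 with h | h
    · linarith only [hσ0, hσ, mul_nonpos_of_nonneg_of_nonpos hD₁pos.le h]
    · exact h
  have hδGI4 : δGI ≤ δA/4 := hδGI ▸ min_le_left _ _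
  have hδGICM : δGI ≤ D₁/CM := hδGI ▸ min_le_right _ _
  have hxδGI : dist x xbar < δGI := mem_ball.mp hx
  have hxδA : x ∈ ball xbar δA := by rw [mem_ball]; linarith
  have hx2δA : x ∈ ball xbar (2*δA) := by rw [mem_ball]; linarith
  have hrlt : r < δGI := by
    rw [hr]; exact lt_of_le_of_lt (Metric.infDist_le_dist_of_mem hxbarM) hxδGI
  have hCMr : CM * r ≤ D₁ := by
    have : r < D₁ / CM := lt_of_lt_of_le hrlt hδGICM
    rw [lt_div_iff₀ hCM] at this
    linarith [this]
  have hσr : σ ≤ D₁ * r := hσ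
  have hσleδ : σ ≤ r := by linarith [mul_le_mul_of_nonneg_right hD₁le hrpos.le]
  -- key estimate
  have key : ∀ y ∈ closedBall x σ, ∀ v ∈ clarkeSubdiff f y,
      D₂ * r ≤ ⟪v, x - P x⟫_ℝ := by
    intro y hy v hv
    have hyx : dist y x ≤ σ := mem_closedBall.mp hy
    have hyδA : y ∈ ball xbar δA := by
      rw [mem_ball]
      calc dist y xbar ≤ dist y x + dist x xbar := dist_triangle _ _ _
        _ < σ + δGI := by linarith
        _ ≤ δA := by linarith
    have hy2δA : y ∈ ball xbar (2*δA) := by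
      rw [mem_ball] at hyδA ⊢; linarith
    have hH2 := H2 y hyδA v hv
    have hH1 := H1 y hy2δA v hv
    have hH3 := H3 x hxδA y hy2δA
    rw [← hr] at hH3
    set t := ‖x - y‖ with ht
    have htσ : t ≤ σ := by
      rw [ht, ← dist_eq_norm, dist_comm]; exact hyx
    have htnn : 0 ≤ t := norm_nonneg _
    clear_value t
    have hQle : ‖Q x (y - x)‖ ≤ ‖y - x‖ := by
      rw [hQ x hxδA]
      calc ‖((Tsp x).orthogonalProjectionOnto (y - x) : Euc d)‖
          ≤ ‖(Tsp x).orthogonalProjectionOnto‖ * ‖y - x‖ :=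
            ((Tsp x).orthogonalProjectionOnto).le_opNorm _
        _ ≤ 1 * ‖y - x‖ := by
            apply mul_le_mul_of_nonneg_right (Submodule.orthogonalProjectionOnto_norm_le _) (norm_nonneg _)
        _ = ‖y - x‖ := one_mul _
    have hPyx : ‖P y - P x‖ ≤ t + CM * (r^2 + t^2) := by
      have h1 : ‖P y - P x‖ ≤ ‖P y - P x - Q x (y - x)‖ + ‖Q x (y - x)‖ := by
        have := norm_add_le (P y - P x - Q x (y - x)) (Q x (y - x))
        simpa using this
      have h2 : ‖y - x‖ = t := by rw [ht, norm_sub_rev]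
      calc ‖P y - P x‖ ≤ CM * (r^2 + t^2) + ‖Q x (y - x)‖ := by
            exact h1.trans (add_le_add_left hH3 _)
        _ ≤ CM * (r^2 + t^2) + t := by linarith [hQle, h2.le, h2.ge]
        _ = t + CM * (r^2 + t^2) := by ring
    have hdecomp : ⟪v, x - P x⟫_ℝ = ⟪v, y - P y⟫_ℝ + ⟪v, (x - y) + (P y - P x)⟫_ℝ := by
      rw [← inner_add_right]
      congr 1
      abel
    have habs : |⟪v, (x - y) + (P y - P x)⟫_ℝ| ≤ ‖v‖ * ‖(x - y) + (P y - P x)‖ :=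
      abs_real_inner_le_norm _ _
    have hnorm : ‖(x - y) + (P y - P x)‖ ≤ t + (t + CM * (r^2 + t^2)) := by
      have h := norm_add_le (x - y) (P y - P x)
      rw [← ht] at h
      exact h.trans (add_le_add le_rfl hPyx)
    have hvnn : 0 ≤ ‖v‖ := norm_nonneg _
    have hB : -(L * (t + (t + CM * (r^2 + t^2)))) ≤ ⟪v, (x - y) + (P y - P x)⟫_ℝ := by
      have h1 : -(‖v‖ * ‖(x - y) + (P y - P x)‖) ≤ ⟪v, (x - y) + (P y - P x)⟫_ℝ :=
        neg_le_of_abs_le habs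
      have h2 : ‖v‖ * ‖(x - y) + (P y - P x)‖ ≤ L * (t + (t + CM * (r^2 + t^2))) := by
        apply mul_le_mul hH1 hnorm (norm_nonneg _) hL.le
      linarith
    set s := Metric.infDist y M with hs
    clear_value s
    have hsr : r ≤ s + t := by
      have h := Metric.infDist_le_infDist_add_dist (x := x) (y := y) (s := M)
      rw [dist_eq_norm, ← hr, ← hs, ← ht] at h
      exact h
    -- arithmetic
    have hCMr2 : CM * r^2 ≤ D₁ * r := by
      have h := mul_le_mul_of_nonneg_right hCMr hrpos.le
      have h2 : CM * r * r = CM * r^2 := by ring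
      linarith only [h, h2]
    have htr : t ≤ r := le_trans htσ hσleδ
    have hCMt2 : CM * t^2 ≤ D₁ * r := by
      have h1 : CM * t * t ≤ CM * t * r :=
        mul_le_mul_of_nonneg_left htr (mul_nonneg hCM.le htnn)
      have h2 : CM * r * t ≤ D₁ * t := mul_le_mul_of_nonneg_right hCMr htnn
      have h3 : D₁ * t ≤ D₁ * r := mul_le_mul_of_nonneg_left htr hD₁pos.le
      have h4 : CM * t * t = CM * t^2 := by ring
      have h5 : CM * t * r = CM * r * t := by ring
      linarith only [h1, h2, h3, h4, h5]
    have hD₁eq : D₁ * (8*(μ+L)) = μ := by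
      rw [hD₁]; field_simp
    have hD₁eqr : D₁ * (8*(μ+L)) * r = μ * r := by rw [hD₁eq]
    have htD : t ≤ D₁ * r := le_trans htσ hσr
    have A1 : μ * t ≤ μ * (D₁ * r) := mul_le_mul_of_nonneg_left htD hμ.le
    have A2 : L * t ≤ L * (D₁ * r) := mul_le_mul_of_nonneg_left htD hL.le
    have A3 : L * (CM * r^2) ≤ L * (D₁ * r) := mul_le_mul_of_nonneg_left hCMr2 hL.le
    have A4 : L * (CM * t^2) ≤ L * (D₁ * r) := mul_le_mul_of_nonneg_left hCMt2 hL.le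
    have A5 : μ * r - μ * t ≤ μ * s := by
      have h := mul_le_mul_of_nonneg_left hsr hμ.le
      have h2 : μ * (s + t) = μ * s + μ * t := by ring
      linarith only [h, h2]
    have A6 : μ * (D₁ * r) + 4 * (L * (D₁ * r)) ≤ μ/2 * r := by
      have h := mul_nonneg (mul_nonneg hμ.le hD₁pos.le) hrpos.le
      have h2 : D₁ * (8*(μ+L)) * r = 8*(μ*D₁*r) + 8*(L*(D₁*r)) := by ring
      have h3 : μ * (D₁ * r) = μ*D₁*r := by ring
      linarith only [hD₁eqr, h, h2, h3]
    rw [hdecomp, hD₂]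
    linarith only [hH2, hB, A1, A2, A3, A4, A5, A6]
  -- convexity
  have hC : Convex ℝ {w : Euc d | D₂ * r ≤ ⟪w, x - P x⟫_ℝ} := by
    apply convex_halfSpace_ge
    exact ⟨fun a b => inner_add_left a b _, fun c a => real_inner_smul_left a _ c⟩
  have hsub : (⋃ y ∈ closedBall x σ, clarkeSubdiff f y) ⊆
      {w : Euc d | D₂ * r ≤ ⟪w, x - P x⟫_ℝ} := by
    intro v hv
    simp only [mem_iUnion] at hv
    obtain ⟨y, hy, hvy⟩ := hv
    exact key y hy v hvy
  have hg' : D₂ * r ≤ ⟪g, x - P x⟫_ℝ := convexHull_min hsub hC hg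
  have h2 : ⟪g, x - P x⟫_ℝ ≤ ‖g‖ * ‖x - P x‖ := real_inner_le_norm _ _
  have h3 : ‖x - P x‖ = r := by rw [hr]; exact (hP x hx2δA).2
  rw [h3] at h2
  have hfin : D₂ * r ≤ ‖g‖ * r := le_trans hg' h2
  exact le_of_mul_le_mul_right hfin hrpos
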